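/- Let ν ∈ (0,1), μ = 1 − ν, α > 0, and set α_N = α·N·ν^N. Then lim_{N→∞} [∫₀¹ (1−u)^N u^{α_N−1} du] / [∫₀¹ (1 + (μ/ν)u)^N u^{α_N−1} du] = μ/(μ + α) = (1−ν)/(1−ν+α). -/

import Mathlib

open Filter Topology MeasureTheory Set

lemma rpow_iOn {p : ℝ} (hp : -1 < p) {t : ℝ} (ht : 0 < t) :
    IntegrableOn (fun u : ℝ => u ^ p) (Ioo (0:ℝ) t) :=
  (intervalIntegral.integrableOn_Ioo_rpow_iff ht).2 hp

lemma rpow_int {p : ℝ} (hp : -1 < p) {t : ℝ} (ht : 0 < t) :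
    ∫ u in Ioo (0:ℝ) t, u ^ p = t ^ (p+1) / (p+1) := by
  rw [← integral_Ioc_eq_integral_Ioo, ← intervalIntegral.integral_of_le ht.le,
    integral_rpow (Or.inl hp), Real.zero_rpow (by linarith : p + 1 ≠ 0), sub_zero]

lemma AA_int {e : ℝ} (he : 0 < e) (N : ℕ) :
    IntegrableOn (fun u : ℝ => (1-u)^N * u^(e-1)) (Ioo (0:ℝ) 1) := by
  have hg := rpow_iOn (p := e-1) (by linarith) one_pos
  have hm : AEStronglyMeasurable (fun u : ℝ => (1-u)^N * u^(e-1))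
      (volume.restrict (Ioo (0:ℝ) 1)) := by
    apply ContinuousOn.aestronglyMeasurable ?_ measurableSet_Ioo
    exact (((continuous_const.sub continuous_id).pow N).continuousOn).mul
      (continuousOn_id.rpow_const (fun x hx => Or.inl (ne_of_gt hx.1)))
  refine Integrable.mono hg hm ?_
  rw [ae_restrict_iff' measurableSet_Ioo]
  filter_upwards with u hu'
  rw [Real.norm_eq_abs, Real.norm_eq_abs, abs_mul]
  have h1 : |(1-u)^N| ≤ 1 := by
    rw [abs_pow]
    apply pow_le_one₀ (abs_nonneg _)
    rw [abs_le]; constructor <;> [linarith [hu'.2]; linarith [hu'.1]]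
  exact mul_le_of_le_one_left (abs_nonneg _) h1

lemma AA_upper {e : ℝ} (he : 0 < e) (N : ℕ) :
    ∫ u in Ioo (0:ℝ) 1, (1-u)^N * u^(e-1) ≤ 1/e := by
  have h1 : ∫ u in Ioo (0:ℝ) 1, (1-u)^N * u^(e-1) ≤ ∫ u in Ioo (0:ℝ) 1, u^(e-1) := by
    refine setIntegral_mono_on (AA_int he N) (rpow_iOn (by linarith) one_pos)
      measurableSet_Ioo (fun u hu => ?_)
    exact mul_le_of_le_one_left (Real.rpow_nonneg hu.1.le _)
      (pow_le_one₀ (by linarith [hu.2]) (by linarith [hu.1]))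
  rwa [rpow_int (by linarith) one_pos, Real.one_rpow, sub_add_cancel] at h1

lemma AA_lower {e δ : ℝ} (he : 0 < e) (hδ : 0 < δ) (hδ1 : δ ≤ 1) (N : ℕ) :
    (1-δ)^N * (δ^e/e) ≤ ∫ u in Ioo (0:ℝ) 1, (1-u)^N * u^(e-1) := by
  have hsub : Ioo (0:ℝ) δ ⊆ Ioo (0:ℝ) 1 := Ioo_subset_Ioo le_rfl hδ1
  calc (1-δ)^N * (δ^e/e) = ∫ u in Ioo (0:ℝ) δ, (1-δ)^N * u^(e-1) := by
        rw [integral_const_mul, rpow_int (by linarith) hδ, sub_add_cancel]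
    _ ≤ ∫ u in Ioo (0:ℝ) δ, (1-u)^N * u^(e-1) := by
        refine setIntegral_mono_on ((rpow_iOn (by linarith) hδ).const_mul _)
          ((AA_int he N).mono_set hsub) measurableSet_Ioo (fun u hu => ?_)
        exact mul_le_mul_of_nonneg_right
          (pow_le_pow_left₀ (by linarith [hu.2]) (by linarith [hu.2]) N)
          (Real.rpow_nonneg hu.1.le _)
    _ ≤ ∫ u in Ioo (0:ℝ) 1, (1-u)^N * u^(e-1) := by
        refine setIntegral_mono_set (AA_int he N) ?_ hsub.eventuallyLE
        filter_upwards [ae_restrict_mem measurableSet_Ioo] with u hu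
        have h0 : (0:ℝ) < u := hu.1
        have h1 : u < 1 := hu.2
        have : (0:ℝ) ≤ 1 - u := by linarith
        positivity

lemma sq_inv_rpow_tendsto {ν α : ℝ} (hν : ν ∈ Set.Ioo (0:ℝ) 1) (hα : 0 < α) :
    Tendsto (fun N : ℕ => (((N:ℝ)^2)⁻¹) ^ (α * N * ν ^ N)) atTop (𝓝 1) := by
  have ht : Tendsto (fun N : ℕ => Real.log (((N:ℝ)^2)⁻¹) * (α * N * ν ^ N)) atTop (𝓝 0) := by
    apply squeeze_zero_norm (a := fun N : ℕ => (2*α) * ((N:ℝ)^2 * ν^N))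
    · intro N
      rcases Nat.eq_zero_or_pos N with h | h
      · simp [h]
      have hN : (0:ℝ) < N := by exact_mod_cast h
      have hlog : |Real.log (((N:ℝ)^2)⁻¹)| ≤ 2 * N := by
        have h1 : (1:ℝ) ≤ (N:ℝ) := by exact_mod_cast h
        rw [Real.log_inv, abs_neg, abs_of_nonneg (Real.log_nonneg (by nlinarith))]
        have h1 : Real.log ((N:ℝ)^2) = 2 * Real.log N := by
          rw [Real.log_pow]; push_cast; ring
        have h2 : Real.log N ≤ N := (Real.log_le_sub_one_of_pos hN).trans (by linarith)
        rw [h1]; linarith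
      have he : (0:ℝ) ≤ α * N * ν ^ N :=
        mul_nonneg (by positivity) (pow_nonneg hν.1.le N)
      rw [norm_mul, Real.norm_eq_abs, Real.norm_eq_abs, abs_of_nonneg he]
      calc |Real.log (((N:ℝ)^2)⁻¹)| * (α * N * ν ^ N) ≤ (2*N) * (α * N * ν ^ N) :=
            mul_le_mul_of_nonneg_right hlog he
        _ = (2*α) * ((N:ℝ)^2 * ν^N) := by ring
    · simpa using (tendsto_pow_const_mul_const_pow_of_lt_one 2 hν.1.le hν.2).const_mul (2*α)
  have := (Real.continuous_exp.tendsto 0).comp ht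
  rw [Real.exp_zero] at this
  apply this.congr'
  filter_upwards [eventually_ge_atTop 1] with N hN
  have hN0 : (0:ℝ) < ((N:ℝ)^2)⁻¹ := by
    have : (0:ℝ) < N := by exact_mod_cast hN
    positivity
  rw [Function.comp_apply, Real.rpow_def_of_pos hN0]

lemma base_pow_tendsto : Tendsto (fun N : ℕ => (1 - ((N:ℝ)^2)⁻¹) ^ N) atTop (𝓝 1) := by
  apply tendsto_of_tendsto_of_tendsto_of_le_of_le' (g := fun N : ℕ => 1 - (N:ℝ)⁻¹)
    (h := fun _ => (1:ℝ))
  · simpa using (tendsto_inv_atTop_nhds_zero_nat (𝕜 := ℝ)).const_sub 1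
  · exact tendsto_const_nhds
  · filter_upwards with N
    have h2 : -2 ≤ -((N:ℝ)^2)⁻¹ := by
      have : ((N:ℝ)^2)⁻¹ ≤ 2 := by
        rcases Nat.eq_zero_or_pos N with h | h
        · simp [h]
        · have h1 : (1:ℝ) ≤ (N:ℝ) := by exact_mod_cast h
          have : (1:ℝ) ≤ (N:ℝ)^2 := by nlinarith
          calc ((N:ℝ)^2)⁻¹ ≤ 1 := by rw [inv_le_one_iff₀]; right; exact this
            _ ≤ 2 := by norm_num
      linarith
    have := one_add_mul_le_pow h2 N
    have heq : (N:ℝ) * ((N:ℝ)^2)⁻¹ = (N:ℝ)⁻¹ := by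
      rcases Nat.eq_zero_or_pos N with h | h
      · simp [h]
      · have hN : (0:ℝ) < N := by exact_mod_cast h
        field_simp
    calc 1 - (N:ℝ)⁻¹ = 1 + (N:ℝ) * -((N:ℝ)^2)⁻¹ := by rw [mul_neg, heq]; ring
      _ ≤ (1 + -((N:ℝ)^2)⁻¹) ^ N := one_add_mul_le_pow h2 N
      _ = (1 - ((N:ℝ)^2)⁻¹) ^ N := by ring_nf
  · filter_upwards with N
    apply pow_le_one₀
    · rcases Nat.eq_zero_or_pos N with h | h
      · simp [h]
      · have hN : (1:ℝ) ≤ (N:ℝ) := by exact_mod_cast h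
        have : (1:ℝ) ≤ (N:ℝ)^2 := by nlinarith
        have : ((N:ℝ)^2)⁻¹ ≤ 1 := by rw [inv_le_one_iff₀]; right; exact this
        linarith
    · have : (0:ℝ) ≤ ((N:ℝ)^2)⁻¹ := by positivity
      linarith

lemma num_tendsto {ν α : ℝ} (hν : ν ∈ Set.Ioo (0:ℝ) 1) (hα : 0 < α) :
    Tendsto (fun N : ℕ => (N:ℝ) * ν^N *
      ∫ u in Ioo (0:ℝ) 1, (1-u)^N * u^(α * N * ν ^ N - 1)) atTop (𝓝 (1/α)) := by
  have key : Tendsto (fun N : ℕ => (α * N * ν ^ N) *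
      ∫ u in Ioo (0:ℝ) 1, (1-u)^N * u^(α * N * ν ^ N - 1)) atTop (𝓝 1) := by
    apply tendsto_of_tendsto_of_tendsto_of_le_of_le'
      (g := fun N : ℕ => (1 - ((N:ℝ)^2)⁻¹) ^ N * (((N:ℝ)^2)⁻¹) ^ (α * N * ν ^ N))
      (h := fun _ => (1:ℝ))
    · simpa using base_pow_tendsto.mul (sq_inv_rpow_tendsto hν hα)
    · exact tendsto_const_nhds
    · filter_upwards [eventually_ge_atTop 1] with N hN
      have hNpos : (0:ℝ) < N := by exact_mod_cast hN
      have he : (0:ℝ) < α * N * ν ^ N := by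
        have := hν.1; positivity
      have hδ : (0:ℝ) < ((N:ℝ)^2)⁻¹ := by positivity
      have hδ1 : ((N:ℝ)^2)⁻¹ ≤ 1 := by
        have h1 : (1:ℝ) ≤ (N:ℝ) := by exact_mod_cast hN
        rw [inv_le_one_iff₀]; right; nlinarith
      have := AA_lower he hδ hδ1 N
      calc (1 - ((N:ℝ)^2)⁻¹) ^ N * (((N:ℝ)^2)⁻¹) ^ (α * N * ν ^ N)
          = ((1 - ((N:ℝ)^2)⁻¹) ^ N * ((((N:ℝ)^2)⁻¹) ^ (α * N * ν ^ N) / (α * N * ν ^ N)))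
            * (α * N * ν ^ N) := by rw [mul_assoc ((1 - ((N:ℝ)^2)⁻¹) ^ N), div_mul_cancel₀ _ he.ne']
        _ ≤ (∫ u in Ioo (0:ℝ) 1, (1-u)^N * u^(α * N * ν ^ N - 1)) * (α * N * ν ^ N) :=
            mul_le_mul_of_nonneg_right this he.le
        _ = _ := by ring
    · filter_upwards [eventually_ge_atTop 1] with N hN
      have hNpos : (0:ℝ) < N := by exact_mod_cast hN
      have he : (0:ℝ) < α * N * ν ^ N := by
        have := hν.1; positivity
      calc (α * N * ν ^ N) * ∫ u in Ioo (0:ℝ) 1, (1-u)^N * u^(α * N * ν ^ N - 1)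
          ≤ (α * N * ν ^ N) * (1 / (α * N * ν ^ N)) :=
            mul_le_mul_of_nonneg_left (AA_upper he N) he.le
        _ = 1 := mul_one_div_cancel he.ne'
  have h2 := key.div_const α
  exact h2.congr (fun N => by field_simp)

lemma DD_sum {e c : ℝ} (he : 0 < e) (N : ℕ) :
    ∫ u in Ioo (0:ℝ) 1, (1 + c*u)^N * u^(e-1)
      = ∑ k ∈ Finset.range (N+1), (N.choose k : ℝ) * c^k / ((k:ℝ) + e) := by
  rw [setIntegral_congr_fun (g := fun u : ℝ =>
      ∑ k ∈ Finset.range (N+1), (N.choose k : ℝ) * c^k * u^((k:ℝ) + e - 1))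
      measurableSet_Ioo ?_]
  · rw [integral_finset_sum]
    · refine Finset.sum_congr rfl (fun k hk => ?_)
      rw [integral_const_mul, rpow_int (by
        have : (0:ℝ) ≤ (k:ℝ) := k.cast_nonneg
        linarith) one_pos]
      rw [sub_add_cancel, Real.one_rpow, mul_one_div]
    · intro k hk
      refine ((rpow_iOn (by
        have : (0:ℝ) ≤ (k:ℝ) := k.cast_nonneg
        linarith) one_pos).const_mul _)
  · intro u hu
    have hup : (0:ℝ) < u := hu.1
    simp only
    rw [add_comm (1:ℝ) (c*u), add_pow, Finset.sum_mul]
    refine Finset.sum_congr rfl (fun k hk => ?_)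
    have hexp : (k:ℝ) + e - 1 = (k:ℝ) + (e-1) := by ring
    rw [hexp, Real.rpow_add hup, Real.rpow_natCast]
    ring

lemma Qsum {c : ℝ} (hc : 0 < c) (N : ℕ) :
    ∑ k ∈ Finset.range (N+1), (N.choose k : ℝ) * c^k / ((k:ℝ)+1)
      = ((1+c)^(N+1) - 1) / (((N:ℝ)+1)*c) := by
  have key : ∀ k ∈ Finset.range (N+1), (N.choose k : ℝ)*c^k/((k:ℝ)+1)
      = ((N+1).choose (k+1) : ℝ) * c^(k+1) / (((N:ℝ)+1)*c) := by
    intro k hk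
    have hnat := Nat.add_one_mul_choose_eq N k
    have hcast : ((N:ℝ)+1) * (N.choose k : ℝ) = ((N+1).choose (k+1) : ℝ) * ((k:ℝ)+1) := by
      exact_mod_cast hnat
    rw [div_eq_div_iff (by positivity) (by positivity)]
    linear_combination (c^(k+1)) * hcast
  rw [Finset.sum_congr rfl key, ← Finset.sum_div]
  congr 1
  have hp := add_pow c 1 (N+1)
  rw [Finset.sum_range_succ'] at hp
  simp only [one_pow, mul_one, pow_zero, Nat.choose_zero_right, Nat.cast_one] at hp
  have : ∑ i ∈ Finset.range (N+1), ((N+1).choose (i+1) : ℝ) * c^(i+1)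
      = ∑ i ∈ Finset.range (N+1), c^(i+1) * ((N+1).choose (i+1) : ℝ) :=
    Finset.sum_congr rfl (fun i _ => mul_comm _ _)
  rw [this]
  rw [add_comm (1:ℝ) c]
  linarith [hp]

lemma choose_id2 (N k : ℕ) :
    ((N:ℝ)+1)*((N:ℝ)+2)*(N.choose k : ℝ)
      = ((k:ℝ)+1)*((k:ℝ)+2)*((N+2).choose (k+2) : ℝ) := by
  have h1 := Nat.add_one_mul_choose_eq N k
  have h2 := Nat.add_one_mul_choose_eq (N+1) (k+1)
  have hnat : (N+1)*(N+2)*N.choose k = (k+1)*(k+2)*(N+2).choose (k+2) := by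
    calc (N+1)*(N+2)*N.choose k = (N+2)*((N+1)*N.choose k) := by ring
      _ = (N+2)*((N+1).choose (k+1)*(k+1)) := by rw [← h1]
      _ = (k+1)*((N+2)*(N+1).choose (k+1)) := by ring
      _ = (k+1)*((N+2).choose (k+2)*(k+2)) := by rw [← h2]
      _ = (k+1)*(k+2)*(N+2).choose (k+2) := by ring
  exact_mod_cast hnat

lemma binom_tail_le {c : ℝ} (hc : 0 ≤ c) (N : ℕ) :
    ∑ i ∈ Finset.range N, ((N+2).choose (i+3) : ℝ) * c^(i+3) ≤ (1+c)^(N+2) := by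
  have hp : (1+c)^(N+2) = ∑ j ∈ Finset.range (N+3), ((N+2).choose j : ℝ) * c^j := by
    rw [add_comm, add_pow]
    exact Finset.sum_congr rfl (fun j _ => by simp [mul_comm])
  rw [hp]
  have hre : ∑ i ∈ Finset.range N, ((N+2).choose (i+3) : ℝ) * c^(i+3)
      = ∑ j ∈ Finset.Ico 3 (N+3), ((N+2).choose j : ℝ) * c^j := by
    rw [Finset.sum_Ico_eq_sum_range]
    simp only [Nat.add_sub_cancel]
    exact Finset.sum_congr rfl (fun i _ => by rw [add_comm 3 i])
  rw [hre]
  apply Finset.sum_le_sum_of_subset_of_nonneg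
  · intro j hj
    simp only [Finset.mem_Ico] at hj
    simp only [Finset.mem_range]
    exact hj.2
  · intro j _ _
    positivity

lemma Rsum_bound {c : ℝ} (hc : 0 < c) (N : ℕ) :
    ∑ i ∈ Finset.range N, (N.choose (i+1) : ℝ) * c^(i+1) * (3/(((i:ℝ)+2)*((i:ℝ)+3)))
      ≤ 3 * (1+c)^(N+2) / (((N:ℝ)+1)*((N:ℝ)+2)*c^2) := by
  have hterm : ∀ i ∈ Finset.range N, (N.choose (i+1) : ℝ) * c^(i+1) * (3/(((i:ℝ)+2)*((i:ℝ)+3)))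
      = (3/(((N:ℝ)+1)*((N:ℝ)+2))) * (((N+2).choose (i+3) : ℝ) * c^(i+1)) := by
    intro i _
    have hid := choose_id2 N (i+1)
    push_cast at hid
    have hN1 : (0:ℝ) < (N:ℝ)+1 := by positivity
    have hN2 : (0:ℝ) < (N:ℝ)+2 := by positivity
    have hi2 : (0:ℝ) < (i:ℝ)+2 := by positivity
    have hi3 : (0:ℝ) < (i:ℝ)+3 := by positivity
    field_simp
    linear_combination hid
  rw [Finset.sum_congr rfl hterm, ← Finset.mul_sum]
  have hsum : ∑ i ∈ Finset.range N, ((N+2).choose (i+3) : ℝ) * c^(i+1)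
      ≤ (1+c)^(N+2) / c^2 := by
    rw [le_div_iff₀ (by positivity)]
    calc (∑ i ∈ Finset.range N, ((N+2).choose (i+3) : ℝ) * c^(i+1)) * c^2
        = ∑ i ∈ Finset.range N, ((N+2).choose (i+3) : ℝ) * c^(i+3) := by
          rw [Finset.sum_mul]
          exact Finset.sum_congr rfl (fun i _ => by ring)
      _ ≤ (1+c)^(N+2) := binom_tail_le hc.le N
  calc (3/(((N:ℝ)+1)*((N:ℝ)+2))) * ∑ i ∈ Finset.range N, ((N+2).choose (i+3) : ℝ) * c^(i+1)
      ≤ (3/(((N:ℝ)+1)*((N:ℝ)+2))) * ((1+c)^(N+2) / c^2) := by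
        apply mul_le_mul_of_nonneg_left hsum (by positivity)
    _ = 3 * (1+c)^(N+2) / (((N:ℝ)+1)*((N:ℝ)+2)*c^2) := by
        field_simp

lemma frac_ineq {x : ℝ} (hx : 0 ≤ x) : 1/(x+1) ≤ 1/(x+2) + 3/((x+2)*(x+3)) := by
  rw [div_add_div _ _ (by positivity) (by positivity), div_le_div_iff₀ (by positivity) (by positivity)]
  nlinarith

lemma den_tendsto {ν α : ℝ} (hν : ν ∈ Set.Ioo (0:ℝ) 1) (hα : 0 < α) :
    Tendsto (fun N : ℕ => (N:ℝ) * ν^N *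
      ∫ u in Ioo (0:ℝ) 1, (1 + ((1-ν)/ν)*u)^N * u^(α*N*ν^N - 1)) atTop
      (𝓝 (1/α + 1/(1-ν))) := by
  obtain ⟨hν0, hν1⟩ := hν
  set c := (1-ν)/ν with hcdef
  have hc : 0 < c := div_pos (by linarith) hν0
  have h1c : 1 + c = ν⁻¹ := by rw [hcdef]; field_simp; ring
  have heN : Tendsto (fun N : ℕ => α*N*ν^N) atTop (𝓝 0) := by
    have := (tendsto_self_mul_const_pow_of_lt_one hν0.le hν1).const_mul α
    simp only [mul_zero] at this
    exact this.congr (fun N => by ring)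
  have he1 : ∀ᶠ N : ℕ in atTop, α*N*ν^N ≤ 1 :=
    heN.eventually (eventually_le_nhds zero_lt_one)
  have hQ : ∀ N : ℕ, (∑ i ∈ Finset.range N, (N.choose (i+1) : ℝ) * c^(i+1) / (((i:ℝ)+1)+1))
      = ((1+c)^(N+1) - 1)/(((N:ℝ)+1)*c) - 1 := by
    intro N
    have := Qsum hc N
    rw [Finset.sum_range_succ'] at this
    simp only [Nat.choose_zero_right, pow_zero, Nat.cast_zero, Nat.cast_one] at this
    have h2 : ∑ i ∈ Finset.range N, (N.choose (i+1) : ℝ) * c^(i+1) / ((((i+1):ℕ):ℝ)+1)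
        = ∑ i ∈ Finset.range N, (N.choose (i+1) : ℝ) * c^(i+1) / (((i:ℝ)+1)+1) := by
      exact Finset.sum_congr rfl (fun i _ => by push_cast; ring_nf)
    rw [h2] at this
    simp only [Nat.cast_one, one_mul, zero_add, div_one] at this
    linarith
  have heq : ∀ᶠ N : ℕ in atTop, (N:ℝ)*ν^N *
      ∫ u in Ioo (0:ℝ) 1, (1 + c*u)^N * u^(α*N*ν^N - 1)
      = 1/α + (N:ℝ)*ν^N * (∑ i ∈ Finset.range N,
          (N.choose (i+1) : ℝ) * c^(i+1) / (((i:ℝ)+1) + α*N*ν^N)) := by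
    filter_upwards [eventually_ge_atTop 1] with N hN
    have hNpos : (0:ℝ) < N := by exact_mod_cast hN
    have he : (0:ℝ) < α*N*ν^N := by positivity
    rw [DD_sum he N, Finset.sum_range_succ']
    have h0 : (N.choose 0 : ℝ) * c^0 / (((0:ℕ):ℝ) + α*N*ν^N) = 1/(α*N*ν^N) := by
      simp
    rw [h0]
    have h2 : ∑ i ∈ Finset.range N, (N.choose (i+1) : ℝ) * c^(i+1) / ((((i+1):ℕ):ℝ) + α*N*ν^N)
        = ∑ i ∈ Finset.range N, (N.choose (i+1) : ℝ) * c^(i+1) / (((i:ℝ)+1) + α*N*ν^N) := by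
      exact Finset.sum_congr rfl (fun i _ => by push_cast; ring_nf)
    rw [h2, mul_add]
    have h3 : (N:ℝ)*ν^N * (1/(α*N*ν^N)) = 1/α := by
      rw [mul_one_div, eq_div_iff (ne_of_gt hα), div_mul_eq_mul_div,
        div_eq_iff (ne_of_gt he)]
      ring
    rw [h3]
    ring
  have hnn : ∀ N : ℕ, (0:ℝ) ≤ (N:ℝ)*ν^N := fun N => by positivity
  have hlow : ∀ᶠ N : ℕ in atTop,
      (N:ℝ)*ν^N * (((1+c)^(N+1) - 1)/(((N:ℝ)+1)*c) - 1)
      ≤ (N:ℝ)*ν^N * (∑ i ∈ Finset.range N,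
          (N.choose (i+1) : ℝ) * c^(i+1) / (((i:ℝ)+1) + α*N*ν^N)) := by
    filter_upwards [he1] with N hN1
    have hPlo : (∑ i ∈ Finset.range N, (N.choose (i+1) : ℝ) * c^(i+1) / (((i:ℝ)+1)+1))
        ≤ ∑ i ∈ Finset.range N, (N.choose (i+1) : ℝ) * c^(i+1) / (((i:ℝ)+1) + α*N*ν^N) := by
      apply Finset.sum_le_sum
      intro i _
      gcongr
    rw [← hQ N]
    exact mul_le_mul_of_nonneg_left hPlo (hnn N)
  have hhigh : ∀ᶠ N : ℕ in atTop,
      (N:ℝ)*ν^N * (∑ i ∈ Finset.range N,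
          (N.choose (i+1) : ℝ) * c^(i+1) / (((i:ℝ)+1) + α*N*ν^N))
      ≤ (N:ℝ)*ν^N * (((1+c)^(N+1) - 1)/(((N:ℝ)+1)*c) - 1)
        + 3/(c^2*ν^2) * ((N:ℝ)/(((N:ℝ)+1)*((N:ℝ)+2))) := by
    filter_upwards [eventually_ge_atTop 1] with N hN
    have hNpos : (0:ℝ) < N := by exact_mod_cast hN
    have he : (0:ℝ) < α*N*ν^N := by positivity
    have hPhi : (∑ i ∈ Finset.range N,
          (N.choose (i+1) : ℝ) * c^(i+1) / (((i:ℝ)+1) + α*N*ν^N))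
        ≤ ∑ i ∈ Finset.range N, (N.choose (i+1) : ℝ) * c^(i+1) / ((i:ℝ)+1) := by
      apply Finset.sum_le_sum
      intro i _
      have hi1 : (0:ℝ) < (i:ℝ)+1 := by positivity
      calc (N.choose (i+1) : ℝ) * c^(i+1) / (((i:ℝ)+1) + α*N*ν^N)
          = ((N.choose (i+1) : ℝ) * c^(i+1)) * (1/(((i:ℝ)+1) + α*N*ν^N)) := by ring
        _ ≤ ((N.choose (i+1) : ℝ) * c^(i+1)) * (1/((i:ℝ)+1)) := by
            apply mul_le_mul_of_nonneg_left
              (one_div_le_one_div_of_le hi1 (by linarith [he.le])) (by positivity)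
        _ = (N.choose (i+1) : ℝ) * c^(i+1) / ((i:ℝ)+1) := by ring
    have hsplit : (∑ i ∈ Finset.range N, (N.choose (i+1) : ℝ) * c^(i+1) / ((i:ℝ)+1))
        ≤ (∑ i ∈ Finset.range N, (N.choose (i+1) : ℝ) * c^(i+1) / (((i:ℝ)+1)+1))
          + ∑ i ∈ Finset.range N, (N.choose (i+1) : ℝ) * c^(i+1) * (3/(((i:ℝ)+2)*((i:ℝ)+3))) := by
      rw [← Finset.sum_add_distrib]
      apply Finset.sum_le_sum
      intro i _
      have ha : (0:ℝ) ≤ (N.choose (i+1) : ℝ) * c^(i+1) := by positivity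
      have hfi := frac_ineq (x := (i:ℝ)) (by positivity)
      calc (N.choose (i+1) : ℝ) * c^(i+1) / ((i:ℝ)+1)
          = ((N.choose (i+1) : ℝ) * c^(i+1)) * (1/((i:ℝ)+1)) := by ring
        _ ≤ ((N.choose (i+1) : ℝ) * c^(i+1)) * (1/((i:ℝ)+2) + 3/(((i:ℝ)+2)*((i:ℝ)+3))) :=
            mul_le_mul_of_nonneg_left hfi ha
        _ = (N.choose (i+1) : ℝ) * c^(i+1) / (((i:ℝ)+1)+1)
            + (N.choose (i+1) : ℝ) * c^(i+1) * (3/(((i:ℝ)+2)*((i:ℝ)+3))) := by ring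
    have hR := Rsum_bound hc N
    have hpow : (N:ℝ)*ν^N * (3 * (1+c)^(N+2) / (((N:ℝ)+1)*((N:ℝ)+2)*c^2))
        = 3/(c^2*ν^2) * ((N:ℝ)/(((N:ℝ)+1)*((N:ℝ)+2))) := by
      rw [h1c, inv_pow]
      have hν2 : ν^(N+2) = ν^N * ν^2 := by rw [pow_add]
      have hνN : (0:ℝ) < ν^N := by positivity
      rw [hν2]
      field_simp
    calc (N:ℝ)*ν^N * (∑ i ∈ Finset.range N,
            (N.choose (i+1) : ℝ) * c^(i+1) / (((i:ℝ)+1) + α*N*ν^N))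
        ≤ (N:ℝ)*ν^N * ((∑ i ∈ Finset.range N, (N.choose (i+1) : ℝ) * c^(i+1) / (((i:ℝ)+1)+1))
          + ∑ i ∈ Finset.range N, (N.choose (i+1) : ℝ) * c^(i+1) * (3/(((i:ℝ)+2)*((i:ℝ)+3)))) :=
          mul_le_mul_of_nonneg_left (hPhi.trans hsplit) (hnn N)
      _ = (N:ℝ)*ν^N * (∑ i ∈ Finset.range N, (N.choose (i+1) : ℝ) * c^(i+1) / (((i:ℝ)+1)+1))
          + (N:ℝ)*ν^N * ∑ i ∈ Finset.range N, (N.choose (i+1) : ℝ) * c^(i+1) * (3/(((i:ℝ)+2)*((i:ℝ)+3))) := by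
          ring
      _ ≤ (N:ℝ)*ν^N * (((1+c)^(N+1) - 1)/(((N:ℝ)+1)*c) - 1)
          + 3/(c^2*ν^2) * ((N:ℝ)/(((N:ℝ)+1)*((N:ℝ)+2))) := by
          apply add_le_add
          · rw [← hQ N]
          · calc (N:ℝ)*ν^N * ∑ i ∈ Finset.range N, (N.choose (i+1) : ℝ) * c^(i+1) * (3/(((i:ℝ)+2)*((i:ℝ)+3)))
                ≤ (N:ℝ)*ν^N * (3 * (1+c)^(N+2) / (((N:ℝ)+1)*((N:ℝ)+2)*c^2)) :=
                  mul_le_mul_of_nonneg_left hR (hnn N)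
              _ = _ := hpow
  have hNdiv : Tendsto (fun N : ℕ => (N:ℝ)/((N:ℝ)+1)) atTop (𝓝 1) :=
    tendsto_natCast_div_add_atTop 1
  have hνN0 : Tendsto (fun N : ℕ => ν^N) atTop (𝓝 0) :=
    tendsto_pow_atTop_nhds_zero_of_lt_one hν0.le hν1
  have hNνN0 : Tendsto (fun N : ℕ => (N:ℝ)*ν^N) atTop (𝓝 0) :=
    tendsto_self_mul_const_pow_of_lt_one hν0.le hν1
  have hlo_lim : Tendsto (fun N : ℕ =>
      (N:ℝ)*ν^N * (((1+c)^(N+1) - 1)/(((N:ℝ)+1)*c) - 1)) atTop (𝓝 (1/(1-ν))) := by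
    have hform : ∀ N : ℕ, (N:ℝ)*ν^N * (((1+c)^(N+1) - 1)/(((N:ℝ)+1)*c) - 1)
        = ((N:ℝ)/((N:ℝ)+1)) * ((ν⁻¹ - ν^N)/c) - (N:ℝ)*ν^N := by
      intro N
      rw [h1c]
      have hνN : (0:ℝ) < ν^N := by positivity
      have hpow : ν^N * (ν⁻¹)^(N+1) = ν⁻¹ := by
        rw [inv_pow, pow_succ]
        field_simp
      have hN1 : (0:ℝ) < (N:ℝ)+1 := by positivity
      have hkey : (N:ℝ)*ν^N * (((ν⁻¹)^(N+1) - 1)/(((N:ℝ)+1)*c) - 1)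
          = ((N:ℝ)/((N:ℝ)+1)) * ((ν^N*(ν⁻¹)^(N+1) - ν^N)/c) - (N:ℝ)*ν^N := by
        field_simp
      rw [hkey, hpow]
    have hlim : Tendsto (fun N : ℕ => ((N:ℝ)/((N:ℝ)+1)) * ((ν⁻¹ - ν^N)/c) - (N:ℝ)*ν^N)
        atTop (𝓝 (1 * ((ν⁻¹ - 0)/c) - 0)) :=
      (hNdiv.mul ((hνN0.const_sub _).div_const _)).sub hNνN0
    have hval : 1 * ((ν⁻¹ - 0)/c) - 0 = 1/(1-ν) := by
      rw [hcdef]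
      field_simp; ring
    rw [← hval]
    exact hlim.congr (fun N => (hform N).symm)
  have herr_lim : Tendsto (fun N : ℕ =>
      3/(c^2*ν^2) * ((N:ℝ)/(((N:ℝ)+1)*((N:ℝ)+2)))) atTop (𝓝 0) := by
    have h2 : Tendsto (fun N : ℕ => ((N:ℝ)+2)⁻¹) atTop (𝓝 0) := by
      apply Tendsto.inv_tendsto_atTop
      exact tendsto_atTop_add_const_right _ 2 tendsto_natCast_atTop_atTop
    have h3 : Tendsto (fun N : ℕ => (N:ℝ)/(((N:ℝ)+1)*((N:ℝ)+2))) atTop (𝓝 0) := by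
      have h4 := hNdiv.mul h2
      rw [mul_zero] at h4
      refine h4.congr (fun N => ?_)
      have hx1 : ((N:ℝ)+1) ≠ 0 := by positivity
      have hx2 : ((N:ℝ)+2) ≠ 0 := by positivity
      field_simp
    have h5 := h3.const_mul (3/(c^2*ν^2))
    rw [mul_zero] at h5
    exact h5
  have hg : Tendsto (fun N : ℕ =>
      1/α + (N:ℝ)*ν^N * (((1+c)^(N+1) - 1)/(((N:ℝ)+1)*c) - 1)) atTop
      (𝓝 (1/α + 1/(1-ν))) := tendsto_const_nhds.add hlo_lim
  have hh : Tendsto (fun N : ℕ =>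
      1/α + (N:ℝ)*ν^N * (((1+c)^(N+1) - 1)/(((N:ℝ)+1)*c) - 1)
        + 3/(c^2*ν^2) * ((N:ℝ)/(((N:ℝ)+1)*((N:ℝ)+2)))) atTop
      (𝓝 (1/α + 1/(1-ν))) := by
    have := hg.add herr_lim
    simpa using this
  apply tendsto_of_tendsto_of_tendsto_of_le_of_le' hg hh
  · filter_upwards [heq, hlow] with N h1 h2
    rw [h1]
    linarith
  · filter_upwards [heq, hhigh] with N h1 h2
    rw [h1]
    linarith

/-- Sub-critical regime (Proposition 7): convergence of the Laplace transform
`E_0(e^{-α_N T_N})` with `α_N = α N ν^N` to `(1-ν)/(1-ν+α)`. -/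
theorem hitting_time_full_state_laplace_limit
    (ν μ α : ℝ) (hν : ν ∈ Set.Ioo (0:ℝ) 1) (hμ : μ = 1 - ν) (hα : 0 < α) :
    Tendsto (fun N : ℕ =>
        (∫ u in Set.Ioo (0:ℝ) 1, (1 - u) ^ N * u ^ (α * N * ν ^ N - 1)) /
        (∫ u in Set.Ioo (0:ℝ) 1, (1 + (μ / ν) * u) ^ N * u ^ (α * N * ν ^ N - 1)))
      atTop (𝓝 ((1 - ν) / (1 - ν + α))) := by
  subst hμ
  have h1ν : (0:ℝ) < 1 - ν := by linarith [hν.2]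
  have hnum := num_tendsto hν hα
  have hden := den_tendsto hν hα
  have hne : 1/α + 1/(1-ν) ≠ 0 := by positivity
  have hdiv := hnum.div hden hne
  have hval : (1/α)/(1/α + 1/(1-ν)) = (1-ν)/(1-ν+α) := by
    rw [div_eq_div_iff (by positivity) (by positivity)]
    field_simp
  rw [hval] at hdiv
  apply hdiv.congr'
  filter_upwards [eventually_ge_atTop 1] with N hN
  have hNpos : (0:ℝ) < N := by exact_mod_cast hN
  have hνN : (0:ℝ) < ν ^ N := pow_pos hν.1 N
  have hNν : (N:ℝ) * ν ^ N ≠ 0 := by positivity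
  exact mul_div_mul_left _ _ hNν
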